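/- If a structure A on a finite domain has a k-ary idempotent polymorphism f such that for each coordinate position i, f restricted to having value x in position i (and arbitrary values elsewhere) is surjective onto A (a Hubie polymorphism in {x}), then for every m ≥ 1, the set of adversaries Υ_{m,k-1,x} generates the full adversary A^m: every tuple t ∈ A^m is the image under some polymorphism (a composition of f with projections) of tuples from Υ_{m,k-1,x}. -/

import Mathlib

/-- Operations in the clone generated by a single `k`-ary operation `f`
(compositions of `f` with projections). -/
inductive InClone (A : Type) (k : ℕ) (f : (Fin k → A) → A) :
    (n : ℕ) → ((Fin n → A) → A) → Prop
  | proj (n : ℕ) (i : Fin n) : InClone A k f n (fun t => t i)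
  | comp (n : ℕ) (gs : Fin k → (Fin n → A) → A)
      (h : ∀ j : Fin k, InClone A k f n (gs j)) :
      InClone A k f n (fun t => f (fun j => gs j t))

lemma InClone.lift {A : Type} {k : ℕ} {f : (Fin k → A) → A} :
    ∀ {n : ℕ} {g : (Fin n → A) → A}, InClone A k f n g →
    ∀ {r : ℕ} (e : Fin n → Fin r), InClone A k f r (fun t => g (fun i => t (e i))) := by
  intro n g h
  induction h with
  | proj i => intro r e; exact .proj r (e i)
  | comp gs h ih =>
    intro r e
    exact .comp r (fun j t => gs j (fun i => t (e i))) (fun j => ih j e)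

def Gen (A : Type) [Fintype A] [DecidableEq A] (x : A) (k : ℕ)
    (f : (Fin k → A) → A) (m : ℕ) (t : Fin m → A) : Prop :=
  ∃ (r : ℕ) (g : (Fin r → A) → A), InClone A k f r g ∧
    ∃ ts : Fin r → Fin m → A,
      (∀ j : Fin r, (Finset.univ.filter (fun i : Fin m => ts j i ≠ x)).card ≤ k - 1) ∧
      (∀ i : Fin m, g (fun j => ts j i) = t i)

lemma gen_comp {A : Type} [Fintype A] [DecidableEq A] {x : A} {k : ℕ}
    {f : (Fin k → A) → A} {m : ℕ} (u : Fin k → Fin m → A)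
    (h : ∀ j : Fin k, Gen A x k f m (u j)) :
    Gen A x k f m (fun i => f (fun j => u j i)) := by
  choose r g hg ts hts1 hts2 using h
  let σ : (Σ j : Fin k, Fin (r j)) ≃ Fin (Fintype.card (Σ j : Fin k, Fin (r j))) :=
    Fintype.equivFin _
  refine ⟨_, fun tt => f (fun j => g j (fun q => tt (σ ⟨j, q⟩))), ?_,
    fun p => ts (σ.symm p).1 (σ.symm p).2, ?_, ?_⟩
  · exact .comp _ (fun j tt => g j (fun q => tt (σ ⟨j, q⟩)))
      (fun j => (hg j).lift (fun q => σ ⟨j, q⟩))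
  · intro p; exact hts1 _ _
  · intro i
    have : ∀ j q, ts (σ.symm (σ ⟨j, q⟩)).1 (σ.symm (σ ⟨j, q⟩)).2 i = ts j q i := by
      intro j q; rw [σ.symm_apply_apply]
    simp only [this]
    congr 1
    funext j
    exact hts2 j i

/-- Chen's Lemma: if `f` is a `k`-ary idempotent Hubie polymorphism in `{x}`, then for
every `m ≥ 1` the set of adversaries `Υ_{m,k-1,x}` generates the full adversary `A^m`:
every tuple `t ∈ A^m` is the coordinatewise image, under some operation in the clone
generated by `f`, of tuples each having at most `k-1` coordinates different from `x`. -/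
theorem hubie_pol_generates_full_adversary (A : Type) [Fintype A] [DecidableEq A]
    (x : A) (k : ℕ) (f : (Fin k → A) → A)
    (hidem : ∀ a : A, f (fun _ => a) = a)
    (hHubie : ∀ (i : Fin k) (a : A), ∃ t : Fin k → A, t i = x ∧ f t = a) :
    ∀ m : ℕ, 1 ≤ m → ∀ t : Fin m → A,
      ∃ (r : ℕ) (g : (Fin r → A) → A), InClone A k f r g ∧
        ∃ ts : Fin r → Fin m → A,
          (∀ j : Fin r, (Finset.univ.filter (fun i : Fin m => ts j i ≠ x)).card ≤ k - 1) ∧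
          (∀ i : Fin m, g (fun j => ts j i) = t i) := by
  intro m _
  have proj_case : ∀ t : Fin m → A,
      (Finset.univ.filter (fun i : Fin m => t i ≠ x)).card ≤ k - 1 → Gen A x k f m t := by
    intro t ht
    exact ⟨1, fun s => s 0, .proj 1 0, fun _ => t, fun _ => ht, fun i => rfl⟩
  suffices H : ∀ N : ℕ, ∀ t : Fin m → A,
      (Finset.univ.filter (fun i : Fin m => t i ≠ x)).card ≤ N → Gen A x k f m t by
    intro t; exact H _ t le_rfl
  intro N
  induction N with
  | zero =>
    intro t ht
    exact proj_case t (ht.trans (Nat.zero_le _))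
  | succ N ih =>
    intro t ht
    by_cases hle : (Finset.univ.filter (fun i : Fin m => t i ≠ x)).card ≤ k - 1
    · exact proj_case t hle
    · -- k = 0 would force A trivial, contradiction
      rcases Nat.eq_zero_or_pos k with hk0 | hkpos
      · exfalso
        apply hle
        have hsub : ∀ a b : A, a = b := by
          intro a b
          have ha := hidem a
          have hb := hidem b
          subst hk0
          rw [show (fun _ : Fin 0 => a) = (fun _ : Fin 0 => b) from funext (fun i => i.elim0)]
            at ha
          exact ha.symm.trans hb
        have : (Finset.univ.filter (fun i : Fin m => t i ≠ x)) = ∅ := by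
          apply Finset.filter_false_of_mem
          intro i _
          simp [hsub (t i) x]
        simp [this]
      · set supp := Finset.univ.filter (fun i : Fin m => t i ≠ x) with hsupp
        have hcard : k ≤ supp.card := by omega
        obtain ⟨S, hSsub, hScard⟩ := Finset.exists_subset_card_eq hcard
        let E : Fin k ≃o S := S.orderIsoOfFin hScard
        let e : Fin k → Fin m := fun j => (E j : Fin m)
        have einj : Function.Injective e := fun a b hab => by
          apply E.injective; exact Subtype.ext hab
        have emem : ∀ j, e j ∈ S := fun j => (E j).2
        -- choose Hubie witnesses
        have hs : ∀ j : Fin k, ∃ s : Fin k → A, s j = x ∧ f s = t (e j) :=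
          fun j => hHubie j (t (e j))
        choose s hs1 hs2 using hs
        -- define the u tuples
        let u : Fin k → Fin m → A := fun j i =>
          if hi : i ∈ S then s (E.symm ⟨i, hi⟩) j else t i
        have hu_at_e : ∀ l j, u j (e l) = s l j := by
          intro l j
          have hmem := emem l
          simp only [u, dif_pos hmem]
          congr 1
          have : (⟨e l, hmem⟩ : S) = E l := rfl
          rw [this, E.symm_apply_apply]
        have hval : ∀ i, f (fun j => u j i) = t i := by
          intro i
          by_cases hi : i ∈ S
          · obtain ⟨l, hl⟩ : ∃ l, e l = i := ⟨E.symm ⟨i, hi⟩, by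
              simp only [e]
              rw [show (E (E.symm ⟨i, hi⟩) : Fin m) = ((⟨i, hi⟩ : S) : Fin m) by
                rw [E.apply_symm_apply]]⟩
            subst hl
            rw [show (fun j => u j (e l)) = s l from funext (fun j => hu_at_e l j)]
            exact hs2 l
          · have : (fun j => u j i) = fun _ => t i := by
              funext j; simp only [u, dif_neg hi]
            rw [this, hidem]
        -- support bound for u j
        have hucard : ∀ j, (Finset.univ.filter (fun i : Fin m => u j i ≠ x)).card ≤ N := by
          intro j
          have hsub2 : (Finset.univ.filter (fun i : Fin m => u j i ≠ x)) ⊆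
              supp.erase (e j) := by
            intro i hi
            simp only [Finset.mem_filter, Finset.mem_univ, true_and] at hi
            rw [Finset.mem_erase]
            constructor
            · intro hieq
              subst hieq
              exact hi (hu_at_e j j ▸ hs1 j)
            · by_cases hiS : i ∈ S
              · exact hSsub hiS
              · simp only [u, dif_neg hiS] at hi
                simp only [hsupp, Finset.mem_filter, Finset.mem_univ, true_and]
                exact hi
          have h1 := Finset.card_le_card hsub2
          have h2 : (supp.erase (e j)).card = supp.card - 1 :=
            Finset.card_erase_of_mem (hSsub (emem j))
          omega
        have hGenu : ∀ j, Gen A x k f m (u j) := fun j => ih (u j) (hucard j)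
        have := gen_comp u hGenu
        rw [show t = (fun i => f (fun j => u j i)) from funext (fun i => (hval i).symm)]
        exact this
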